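/- The collection of orthohedral subsets of ℤ^N is closed under finite intersections, finite unions, and complements. -/

import Mathlib

open Pointwise

namespace PeiPaper

/-- Points of the face of the standard orthant spanned by the canonical basis vectors in `Y`. -/
def stdFace (N : ℕ) (Y : Finset (Fin N)) : Set (Fin N → ℤ) :=
  {v | (∀ i, 0 ≤ v i) ∧ ∀ i, i ∉ Y → v i = 0}

/-- Integral orthogonal matrix. -/
def IsOrthMat {N : ℕ} (A : Matrix (Fin N) (Fin N) ℤ) : Prop :=
  A * A.transpose = 1

/-- `L` is an integral orthant of rank `k` in `ℤ^N`: an affine-orthogonal image of a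
rank-`k` face of the standard orthant. -/
def IsOrthantOfRank {N : ℕ} (L : Set (Fin N → ℤ)) (k : ℕ) : Prop :=
  ∃ (a : Fin N → ℤ) (A : Matrix (Fin N) (Fin N) ℤ) (Y : Finset (Fin N)),
    IsOrthMat A ∧ Y.card = k ∧ L = (fun v => a + A.mulVec v) '' stdFace N Y

def IsOrthant {N : ℕ} (L : Set (Fin N → ℤ)) : Prop := ∃ k, IsOrthantOfRank L k

/-- `S` is orthohedral: a finite union of integral orthants. -/
def IsOrthohedral {N : ℕ} (S : Set (Fin N → ℤ)) : Prop :=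
  ∃ 𝓛 : Set (Set (Fin N → ℤ)), 𝓛.Finite ∧ (∀ L ∈ 𝓛, IsOrthant L) ∧ S = ⋃₀ 𝓛

/-- The rank of a set: the maximal rank of an orthant contained in it. -/
noncomputable def orthRank {N : ℕ} (S : Set (Fin N → ℤ)) : ℕ :=
  sSup {k | ∃ L, IsOrthantOfRank L k ∧ L ⊆ S}

/-- Commensurability: the intersection is nonempty and has the same rank as both sets. -/
def Commensurable {N : ℕ} (L L' : Set (Fin N → ℤ)) : Prop :=
  (L ∩ L').Nonempty ∧ orthRank L = orthRank (L ∩ L') ∧ orthRank L' = orthRank (L ∩ L')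

/-- The rank-`k` orthants contained in `S`. -/
def germSet {N : ℕ} (S : Set (Fin N → ℤ)) (k : ℕ) : Set (Set (Fin N → ℤ)) :=
  {L | IsOrthantOfRank L k ∧ L ⊆ S}

/-- The rank-`k` germs of `S`: commensurability classes of rank-`k` orthants of `S`. -/
def Germ {N : ℕ} (S : Set (Fin N → ℤ)) (k : ℕ) : Type _ :=
  Quot (fun L L' : germSet S k => Commensurable L.1 L'.1)

def germOf {N : ℕ} (S : Set (Fin N → ℤ)) (k : ℕ) (L : germSet S k) : Germ S k :=
  Quot.mk _ L

/-- The number of rank-`k` germs of `S` (as a natural number; `0` if infinite). -/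
noncomputable def heightAt {N : ℕ} (S : Set (Fin N → ℤ)) (k : ℕ) : ℕ :=
  Nat.card (Germ S k)

/-- The height of an orthohedral set: the number of germs of maximal rank. -/
noncomputable def height {N : ℕ} (S : Set (Fin N → ℤ)) : ℕ :=
  heightAt S (orthRank S)

/-- `f` is (the restriction of) an isometry of `ℤ^N` on `L`. -/
def IsometricOn {N : ℕ} (f : (Fin N → ℤ) → (Fin N → ℤ)) (L : Set (Fin N → ℤ)) : Prop :=
  ∃ (a : Fin N → ℤ) (A : Matrix (Fin N) (Fin N) ℤ),
    IsOrthMat A ∧ ∀ x ∈ L, f x = a + A.mulVec x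

/-- `f` is (the restriction of) a translation on `L`. -/
def TranslationOn {N : ℕ} (f : (Fin N → ℤ) → (Fin N → ℤ)) (L : Set (Fin N → ℤ)) : Prop :=
  ∃ a : Fin N → ℤ, ∀ x ∈ L, f x = a + x

/-- `f` is a piecewise-Euclidean-isometric map on `S`. -/
def IsPeiMapOn {N : ℕ} (S : Set (Fin N → ℤ)) (f : (Fin N → ℤ) → (Fin N → ℤ)) : Prop :=
  ∃ 𝓛 : Set (Set (Fin N → ℤ)), 𝓛.Finite ∧ (∀ L ∈ 𝓛, IsOrthant L) ∧
    S = ⋃₀ 𝓛 ∧ 𝓛.PairwiseDisjoint id ∧ ∀ L ∈ 𝓛, IsometricOn f L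

/-- `f` is a piecewise-Euclidean-translation map on `S`. -/
def IsPetMapOn {N : ℕ} (S : Set (Fin N → ℤ)) (f : (Fin N → ℤ) → (Fin N → ℤ)) : Prop :=
  ∃ 𝓛 : Set (Set (Fin N → ℤ)), 𝓛.Finite ∧ (∀ L ∈ 𝓛, IsOrthant L) ∧
    S = ⋃₀ 𝓛 ∧ 𝓛.PairwiseDisjoint id ∧ ∀ L ∈ 𝓛, TranslationOn f L

def IsPeiIso {N : ℕ} (S S' : Set (Fin N → ℤ)) (f : (Fin N → ℤ) → (Fin N → ℤ)) : Prop :=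
  IsPeiMapOn S f ∧ Set.InjOn f S ∧ f '' S = S'

def PeiIsomorphic {N : ℕ} (S S' : Set (Fin N → ℤ)) : Prop := ∃ f, IsPeiIso S S' f

def IsPetIso {N : ℕ} (S S' : Set (Fin N → ℤ)) (f : (Fin N → ℤ) → (Fin N → ℤ)) : Prop :=
  IsPetMapOn S f ∧ Set.InjOn f S ∧ f '' S = S'

def PetIsomorphic {N : ℕ} (S S' : Set (Fin N → ℤ)) : Prop := ∃ f, IsPetIso S S' f

/-- A pei-permutation of `S`: a permutation of `ℤ^N` supported on `S` which is pei on `S`. -/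
def IsPeiPerm {N : ℕ} (S : Set (Fin N → ℤ)) (g : Equiv.Perm (Fin N → ℤ)) : Prop :=
  IsPeiMapOn S ⇑g ∧ ∀ x ∉ S, g x = x

/-- The element `g` has rank at most `k`: it is supported on an orthohedral set of rank `≤ k`. -/
def rankLE {N : ℕ} (g : Equiv.Perm (Fin N → ℤ)) (k : ℕ) : Prop :=
  ∃ T : Set (Fin N → ℤ), IsOrthohedral T ∧ orthRank T ≤ k ∧ ∀ x ∉ T, g x = x

/-- `g` fixes every rank-`k` germ of `S`. -/
def FixesGerm {N : ℕ} (S : Set (Fin N → ℤ)) (k : ℕ) (g : Equiv.Perm (Fin N → ℤ)) : Prop :=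
  ∀ L, IsOrthantOfRank L k → L ⊆ S →
    ∃ L', IsOrthantOfRank L' k ∧ L' ⊆ L ∧ Commensurable L L' ∧
      IsometricOn (⇑g) L' ∧ Commensurable (⇑g '' L') L

/-- `g` fixes every rank-`k` germ of `S` and acts on its tangent coset by a translation. -/
def TranslatesGerm {N : ℕ} (S : Set (Fin N → ℤ)) (k : ℕ) (g : Equiv.Perm (Fin N → ℤ)) : Prop :=
  ∀ L, IsOrthantOfRank L k → L ⊆ S →
    ∃ L' a, IsOrthantOfRank L' k ∧ L' ⊆ L ∧ Commensurable L L' ∧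
      (∀ x ∈ L', g x = a + x) ∧ Commensurable (⇑g '' L') L

/-- `σ` is the map induced by `g` on the rank-`k` germs of `S`. -/
def InducesGermMap {N : ℕ} (S : Set (Fin N → ℤ)) (k : ℕ) (g : Equiv.Perm (Fin N → ℤ))
    (σ : Germ S k → Germ S k) : Prop :=
  ∀ L : germSet S k, ∃ (L'' : Set (Fin N → ℤ)) (M : germSet S k),
    IsOrthantOfRank L'' k ∧ L'' ⊆ L.1 ∧ Commensurable L.1 L'' ∧
    M.1 = ⇑g '' L'' ∧ σ (germOf S k L) = germOf S k M

/-- A finitary permutation which is even (has sign `1` on a finite invariant subset). -/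
def IsEvenFinitary {α : Type*} (σ : Equiv.Perm α) : Prop :=
  ∃ (F : Finset α) (σF : Equiv.Perm F),
    (∀ a ∉ F, σ a = a) ∧ (∀ a : F, σ (a : α) = (σF a : α)) ∧
    @Equiv.Perm.sign F (Classical.decEq _) inferInstance σF = 1

/-- `g` induces an even finitary permutation on the rank-`k` germs of `S`. -/
def IsEvenOnGerms {N : ℕ} (S : Set (Fin N → ℤ)) (k : ℕ) (g : Equiv.Perm (Fin N → ℤ)) : Prop :=
  ∃ σ : Equiv.Perm (Germ S k), InducesGermMap S k g ⇑σ ∧ IsEvenFinitary σ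

/-- Ordering of germs (of arbitrary ranks): `p ≤ q` if they have representatives `L ⊆ L'`. -/
def germLE {N : ℕ} (S : Set (Fin N → ℤ)) (p q : Σ k, Germ S k) : Prop :=
  ∃ (L : germSet S p.1) (L' : germSet S q.1),
    germOf S p.1 L = p.2 ∧ germOf S q.1 L' = q.2 ∧ L.1 ⊆ L'.1

/-- A maximal germ of `S`. -/
def IsMaxGerm {N : ℕ} (S : Set (Fin N → ℤ)) (p : Σ k, Germ S k) : Prop :=
  ∀ q, germLE S p q → germLE S q p

/-- A `0`-based orthant. -/
def IsBasedOrthant {N : ℕ} (L0 : Set (Fin N → ℤ)) : Prop :=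
  ∃ (A : Matrix (Fin N) (Fin N) ℤ) (Y : Finset (Fin N)),
    IsOrthMat A ∧ L0 = (fun v => A.mulVec v) '' stdFace N Y

/-- Two (oriented) parallel orthants. -/
def ParallelOrthants {N : ℕ} (L L' : Set (Fin N → ℤ)) : Prop :=
  ∃ a : Fin N → ℤ, L' = a +ᵥ L

/-- The indicator image `S_τ` of `S`: the union of the `0`-based parallel translates of
the orthants contained in `S`. -/
def indicatorImage {N : ℕ} (S : Set (Fin N → ℤ)) : Set (Fin N → ℤ) :=
  ⋃₀ {L0 | IsBasedOrthant L0 ∧ ∃ a : Fin N → ℤ, (a +ᵥ L0) ⊆ S}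

/-- The height function `h_S`: the number of maximal germs of `S` whose indicator is `L0`. -/
noncomputable def hFun {N : ℕ} (S : Set (Fin N → ℤ)) (L0 : Set (Fin N → ℤ)) : ℕ :=
  Nat.card {p : Σ k, Germ S k //
    IsMaxGerm S p ∧ ∃ L : germSet S p.1, germOf S p.1 L = p.2 ∧ ∃ a : Fin N → ℤ, L.1 = a +ᵥ L0}

/-- `S` is quasi-normal: the maximal based orthants of `S_τ` are exactly the support of `h_S`. -/
def QuasiNormal {N : ℕ} (S : Set (Fin N → ℤ)) : Prop :=
  ∀ L0 : Set (Fin N → ℤ),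
    (IsBasedOrthant L0 ∧ L0 ⊆ indicatorImage S ∧
      ∀ L1, IsBasedOrthant L1 → L1 ⊆ indicatorImage S → L0 ⊆ L1 → L1 ⊆ L0)
    ↔ (IsBasedOrthant L0 ∧ 0 < hFun S L0)

/-- The germ `q` of `S'` is the image of the germ `p` of `S` under the injective pei-map `f`. -/
def GermMapsTo {N : ℕ} (f : (Fin N → ℤ) → (Fin N → ℤ)) (S S' : Set (Fin N → ℤ))
    (p : Σ k, Germ S k) (q : Σ k, Germ S' k) : Prop :=
  p.1 = q.1 ∧ ∃ (L : germSet S p.1) (L'' : Set (Fin N → ℤ)) (M : germSet S' q.1),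
    germOf S p.1 L = p.2 ∧ IsOrthantOfRank L'' p.1 ∧ L'' ⊆ L.1 ∧ Commensurable L.1 L'' ∧
    M.1 = f '' L'' ∧ germOf S' q.1 M = q.2

/-- A stack of `h` parallel rank-`n` orthants. -/
def IsStack {N : ℕ} (S : Set (Fin N → ℤ)) (n h : ℕ) : Prop :=
  ∃ (L0 : Set (Fin N → ℤ)) (a : Fin h → (Fin N → ℤ)),
    IsOrthantOfRank L0 n ∧
    (Pairwise fun i j => Disjoint (a i +ᵥ L0) (a j +ᵥ L0)) ∧
    S = ⋃ i, a i +ᵥ L0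

/-- A coordinate half-space of `ℤ^N`. -/
def IsHalfSpace {N : ℕ} (H : Set (Fin N → ℤ)) : Prop :=
  ∃ (i : Fin N) (c : ℤ), H = {x | x i ≤ c} ∨ H = {x | c ≤ x i}

/-- The canonical embedding `ℤ^N → ℤ^{N+1}`. -/
def emb (N : ℕ) (x : Fin N → ℤ) : Fin (N + 1) → ℤ :=
  fun i => if h : (i : ℕ) < N then x ⟨i, h⟩ else 0

/-- The sum of all matrix entries of a finitely supported family of vectors. -/
noncomputable def totalSum (k : ℕ) (Γ : Type*) : (Γ →₀ (Fin k → ℤ)) →+ ℤ :=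
  Finsupp.liftAddHom (fun _ => ∑ i : Fin k, Pi.evalAddMonoidHom (fun _ => ℤ) i)

/-- The clique (flag) complex of a graph. -/
def cliqueComplex {V : Type*} (G : SimpleGraph V) : Set (Finset V) :=
  {s | s.Nonempty ∧ G.IsClique (s : Set V)}

/-- The geometric realization of a simplicial complex on vertex set `V`. -/
def realization {V : Type*} (K : Set (Finset V)) : Set (V → ℝ) :=
  {f | (∀ v, 0 ≤ f v) ∧ ∃ s ∈ K, Function.support f ⊆ ↑s ∧ ∑ v ∈ s, f v = 1}

/-- A wedge (bouquet) of `n`-spheres indexed by `ι`, with basepoint `b`. -/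
noncomputable def wedgeSpheres (ι : Type) (n : ℕ)
    (b : Metric.sphere (0 : EuclideanSpace ℝ (Fin (n + 1))) 1) : Type :=
  Quot (fun p q : Unit ⊕ (ι × Metric.sphere (0 : EuclideanSpace ℝ (Fin (n + 1))) 1) =>
    (Sum.elim (fun _ => True) (fun pr => pr.2 = b) p) ∧
    (Sum.elim (fun _ => True) (fun qr => qr.2 = b) q))

noncomputable instance (ι : Type) (n : ℕ) (b : Metric.sphere (0 : EuclideanSpace ℝ (Fin (n + 1))) 1) :
    TopologicalSpace (wedgeSpheres ι n b) :=
  letI : TopologicalSpace ι := ⊥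
  instTopologicalSpaceQuot



section Orthohedral0

/-- A "ray" in `ℤ`: a point, or an upward or downward ray. -/
def IsRay (I : Set ℤ) : Prop := ∃ c : ℤ, I = {c} ∨ I = Set.Ici c ∨ I = Set.Iic c

/-- A finite union of rays. -/
def IsRayUnion (K : Set ℤ) : Prop :=
  ∃ F : Set (Set ℤ), F.Finite ∧ (∀ J ∈ F, IsRay J) ∧ K = ⋃₀ F

lemma IsRay.isRayUnion {I : Set ℤ} (h : IsRay I) : IsRayUnion I :=
  ⟨{I}, Set.finite_singleton _, by simpa using h, by simp⟩

lemma isRayUnion_of_finite {K : Set ℤ} (h : K.Finite) : IsRayUnion K := by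
  refine ⟨(fun c => ({c} : Set ℤ)) '' K, h.image _, ?_, ?_⟩
  · rintro J ⟨c, -, rfl⟩; exact ⟨c, Or.inl rfl⟩
  · ext z; simp

lemma isRayUnion_univ : IsRayUnion (Set.univ : Set ℤ) := by
  refine ⟨{Set.Iic 0, Set.Ici 0}, Set.toFinite _, ?_, ?_⟩
  · rintro J (rfl | rfl)
    · exact ⟨0, by simp⟩
    · exact ⟨0, by simp⟩
  · ext z; simp

lemma inter_ray_ray {I I' : Set ℤ} (h : IsRay I) (h' : IsRay I') : IsRayUnion (I ∩ I') := by
  obtain ⟨c, hc⟩ := h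
  obtain ⟨c', hc'⟩ := h'
  rcases hc with rfl | rfl | rfl
  · exact isRayUnion_of_finite ((Set.finite_singleton c).inter_of_left _)
  · rcases hc' with rfl | rfl | rfl
    · exact isRayUnion_of_finite ((Set.finite_singleton c').inter_of_right _)
    · rw [Set.Ici_inter_Ici]; exact IsRay.isRayUnion ⟨max c c', by simp [Or.inr]⟩
    · rw [Set.Ici_inter_Iic]; exact isRayUnion_of_finite (Set.finite_Icc _ _)
  · rcases hc' with rfl | rfl | rfl
    · exact isRayUnion_of_finite ((Set.finite_singleton c').inter_of_right _)
    · rw [Set.inter_comm, Set.Ici_inter_Iic]; exact isRayUnion_of_finite (Set.finite_Icc _ _)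
    · rw [Set.Iic_inter_Iic]; exact IsRay.isRayUnion ⟨min c c', by simp⟩

lemma compl_ray {I : Set ℤ} (h : IsRay I) : IsRayUnion Iᶜ := by
  obtain ⟨c, rfl | rfl | rfl⟩ := h
  · refine ⟨{Set.Iic (c-1), Set.Ici (c+1)}, Set.toFinite _, ?_, ?_⟩
    · rintro J (rfl | rfl)
      · exact ⟨c-1, by simp⟩
      · exact ⟨c+1, by simp [Or.inr]⟩
    · ext z; simp
  · refine ⟨{Set.Iic (c-1)}, Set.toFinite _, ?_, ?_⟩
    · rintro J rfl; exact ⟨c-1, by simp⟩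
    · ext z; simp
  · refine ⟨{Set.Ici (c+1)}, Set.toFinite _, ?_, ?_⟩
    · rintro J rfl; exact ⟨c+1, by simp [Or.inr]⟩
    · ext z; simp

lemma orthMat_signed {N : ℕ} {A : Matrix (Fin N) (Fin N) ℤ} (hA : IsOrthMat A) :
    ∃ (π : Fin N → Fin N) (ε : Fin N → ℤ), Function.Bijective π ∧
      (∀ i, ε i * ε i = 1) ∧ (∀ i k, A i k = if k = π i then ε i else 0) := by
  classical
  have hrow : ∀ i j, ∑ k, A i k * A j k = (1 : Matrix (Fin N) (Fin N) ℤ) i j := by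
    intro i j
    have := congrFun (congrFun hA i) j
    simpa [Matrix.mul_apply, Matrix.transpose_apply] using this
  have hsq : ∀ z : ℤ, z ≠ 0 → 1 ≤ z * z := by
    intro z hz; nlinarith [Int.one_le_abs hz, abs_mul_abs_self z]
  have hex : ∀ i, ∃ k, A i k ≠ 0 := by
    intro i
    by_contra h
    push_neg at h
    have := hrow i i
    simp [h, Matrix.one_apply_eq] at this
  choose π hπ using hex
  have huniq : ∀ i k, k ≠ π i → A i k = 0 := by
    intro i k hk
    by_contra h
    have h1 : ∑ m ∈ ({k, π i} : Finset (Fin N)), A i m * A i m ≤ ∑ m, A i m * A i m := by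
      apply Finset.sum_le_sum_of_subset_of_nonneg (Finset.subset_univ _)
      intro m _ _; exact mul_self_nonneg _
    rw [Finset.sum_pair hk] at h1
    have := hrow i i
    rw [Matrix.one_apply_eq] at this
    have := hsq _ h
    have := hsq _ (hπ i)
    omega
  refine ⟨π, fun i => A i (π i), ?_, ?_, ?_⟩
  · rw [← Finite.injective_iff_bijective]
    intro i j hij
    by_contra hne
    have h0 := hrow i j
    rw [Matrix.one_apply_ne hne] at h0
    rw [Finset.sum_eq_single (π i)] at h0
    · rw [hij] at h0
      exact (mul_ne_zero (by rw [← hij]; exact hπ i) (hπ j)) h0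
    · intro m _ hm; rw [huniq i m hm, zero_mul]
    · intro h; exact absurd (Finset.mem_univ _) h
  · intro i
    have := hrow i i
    rw [Matrix.one_apply_eq, Finset.sum_eq_single (π i)] at this
    · exact this
    · intro m _ hm; rw [huniq i m hm, zero_mul]
    · intro h; exact absurd (Finset.mem_univ _) h
  · intro i k
    split_ifs with h
    · rw [h]
    · exact huniq i k h

lemma isOrthant_isBox {N : ℕ} {L : Set (Fin N → ℤ)} (h : IsOrthant L) :
    ∃ I : Fin N → Set ℤ, (∀ j, IsRay (I j)) ∧ L = {v | ∀ j, v j ∈ I j} := by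
  classical
  obtain ⟨k, a, A, Y, hA, -, rfl⟩ := h
  obtain ⟨π, ε, hbij, hee, hAe⟩ := orthMat_signed hA
  have hmv : ∀ (v : Fin N → ℤ) i, A.mulVec v i = ε i * v (π i) := by
    intro v i
    simp [Matrix.mulVec, dotProduct, hAe, ite_mul, Finset.sum_ite_eq]
  have hsign : ∀ i, ε i = 1 ∨ ε i = -1 := by
    intro i; exact Int.isUnit_iff.mp (IsUnit.of_mul_eq_one _ (hee i))
  refine ⟨fun i => if π i ∈ Y then (if ε i = 1 then Set.Ici (a i) else Set.Iic (a i)) else {a i},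
    ?_, ?_⟩
  · intro j
    refine ⟨a j, ?_⟩
    dsimp only
    split_ifs with h1 h2
    · exact Or.inr (Or.inl rfl)
    · exact Or.inr (Or.inr rfl)
    · exact Or.inl rfl
  · ext w
    constructor
    · rintro ⟨v, ⟨hv0, hvY⟩, rfl⟩ i
      simp only [Pi.add_apply, hmv, Set.mem_setOf_eq]
      split_ifs with h1 h2
      · rw [h2]; simp only [Set.mem_Ici]; have := hv0 (π i); omega
      · rcases hsign i with h | h
        · exact absurd h h2
        · rw [h]; simp only [Set.mem_Iic]; have := hv0 (π i); omega
      · rw [hvY (π i) h1]; simp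
    · intro hw
      let e := Equiv.ofBijective π hbij
      refine ⟨fun m => ε (e.symm m) * (w (e.symm m) - a (e.symm m)), ⟨?_, ?_⟩, ?_⟩
      · intro m
        dsimp only
        have hi := hw (e.symm m)
        dsimp only at hi
        have hem : π (e.symm m) = m := e.apply_symm_apply m
        rw [hem] at hi
        split_ifs at hi with h1 h2
        · rw [h2]; simp only [Set.mem_Ici] at hi; omega
        · rcases hsign (e.symm m) with h | h
          · exact absurd h h2
          · rw [h]; simp only [Set.mem_Iic] at hi; omega
        · simp only [Set.mem_singleton_iff] at hi; rw [hi]; simp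
      · intro m hm
        dsimp only
        have hi := hw (e.symm m)
        dsimp only at hi
        have hem : π (e.symm m) = m := e.apply_symm_apply m
        rw [hem] at hi
        rw [if_neg hm] at hi
        simp only [Set.mem_singleton_iff] at hi
        rw [hi]; ring
      · funext i
        simp only [Pi.add_apply, hmv]
        have hsi : e.symm (π i) = i := e.symm_apply_apply i
        rw [hsi]
        linear_combination (w i - a i) * hee i

lemma isOrthant_of_rays {N : ℕ} (I : Fin N → Set ℤ) (hI : ∀ j, IsRay (I j)) :
    IsOrthant {v | ∀ j, v j ∈ I j} := by
  classical
  choose c hc using hI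
  have hIciIic : ∀ z : ℤ, Set.Ici z ≠ Set.Iic z := by
    intro z h
    have h1 : z + 1 ∈ Set.Ici z := by simp
    rw [h] at h1
    simp at h1
  set ε : Fin N → ℤ := fun j => if I j = Set.Iic (c j) then -1 else 1 with hε
  set Y : Finset (Fin N) := Finset.univ.filter (fun j => I j ≠ {c j}) with hY
  have hee : ∀ j, ε j * ε j = 1 := by
    intro j; simp only [hε]; split_ifs <;> ring
  refine ⟨Y.card, c, Matrix.diagonal ε, Y, ?_, rfl, ?_⟩
  · unfold IsOrthMat
    rw [Matrix.diagonal_transpose, Matrix.diagonal_mul_diagonal]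
    have : (fun i => ε i * ε i) = fun _ => (1 : ℤ) := funext hee
    rw [this, Matrix.diagonal_one]
  · ext w
    constructor
    · intro hw
      refine ⟨fun j => ε j * (w j - c j), ⟨?_, ?_⟩, ?_⟩
      · intro j
        dsimp only
        have hj := hw j
        rcases hc j with h | h | h
        · rw [h] at hj; simp only [Set.mem_singleton_iff] at hj
          simp [hj]
        · have hne : ε j = 1 := by
            simp only [hε]; rw [if_neg (h ▸ hIciIic (c j))]
          rw [h] at hj; simp only [Set.mem_Ici] at hj
          rw [hne]; omega
        · have hne : ε j = -1 := by simp only [hε]; rw [if_pos h]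
          rw [h] at hj; simp only [Set.mem_Iic] at hj
          rw [hne]; omega
      · intro j hj
        dsimp only
        rw [hY] at hj
        simp only [Finset.mem_filter, Finset.mem_univ, true_and, not_not] at hj
        have h2 := hw j
        rw [hj] at h2
        simp only [Set.mem_singleton_iff] at h2
        rw [h2]; ring
      · funext j
        simp only [Pi.add_apply, Matrix.mulVec_diagonal]
        linear_combination (w j - c j) * hee j
    · rintro ⟨v, ⟨hv0, hvY⟩, rfl⟩ j
      simp only [Pi.add_apply, Matrix.mulVec_diagonal]
      rcases hc j with h | h | h
      · have hj : j ∉ Y := by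
          rw [hY]; simp only [Finset.mem_filter, Finset.mem_univ, true_and, not_not]; exact h
        rw [hvY j hj, h]
        simp
      · have hne : ε j = 1 := by
          simp only [hε]; rw [if_neg (h ▸ hIciIic (c j))]
        rw [h, hne]
        simp only [Set.mem_Ici]
        have := hv0 j; omega
      · have hne : ε j = -1 := by simp only [hε]; rw [if_pos h]
        rw [h, hne]
        simp only [Set.mem_Iic]
        have := hv0 j; omega

lemma orthohedral_pi {N : ℕ} (K : Fin N → Set ℤ) (hK : ∀ j, IsRayUnion (K j)) :
    IsOrthohedral {v | ∀ j, v j ∈ K j} := by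
  classical
  choose F hFfin hFray hFeq using hK
  refine ⟨(fun g : Fin N → Set ℤ => {v | ∀ j, v j ∈ g j}) '' (Set.univ.pi F),
    (Set.Finite.pi fun j => hFfin j).image _, ?_, ?_⟩
  · rintro L ⟨g, hg, rfl⟩
    exact isOrthant_of_rays g fun j => hFray j (g j) (hg j (Set.mem_univ j))
  · ext v
    simp only [Set.mem_setOf_eq, Set.mem_sUnion, Set.mem_image]
    constructor
    · intro hv
      have : ∀ j, ∃ J, J ∈ F j ∧ v j ∈ J := by
        intro j
        have := hv j
        rw [hFeq j] at this
        exact this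
      choose g hg1 hg2 using this
      exact ⟨{v | ∀ j, v j ∈ g j}, ⟨g, fun j _ => hg1 j, rfl⟩, hg2⟩
    · rintro ⟨t, ⟨g, hg, rfl⟩, hv⟩ j
      rw [hFeq j]
      exact ⟨g j, hg j (Set.mem_univ j), hv j⟩

lemma orthohedral_sUnion {N : ℕ} {F : Set (Set (Fin N → ℤ))} (hF : F.Finite)
    (h : ∀ S ∈ F, IsOrthohedral S) : IsOrthohedral (⋃₀ F) := by
  classical
  choose 𝓛 h1 h2 h3 using h
  haveI := hF.to_subtype
  refine ⟨⋃ S : F, 𝓛 S.1 S.2, Set.finite_iUnion fun S => h1 S.1 S.2, ?_, ?_⟩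
  · intro L hL
    rw [Set.mem_iUnion] at hL
    obtain ⟨S, hS⟩ := hL
    exact h2 S.1 S.2 L hS
  · rw [Set.sUnion_iUnion]
    ext x
    simp only [Set.mem_sUnion, Set.mem_iUnion]
    constructor
    · rintro ⟨S, hS, hx⟩
      rw [h3 S hS] at hx
      obtain ⟨t, ht, hxt⟩ := hx
      exact ⟨⟨S, hS⟩, t, ht, hxt⟩
    · rintro ⟨S, t, ht, hxt⟩
      refine ⟨S.1, S.2, ?_⟩
      rw [h3 S.1 S.2]
      exact ⟨t, ht, hxt⟩

lemma orthohedral_inter_orthant {N : ℕ} {L M : Set (Fin N → ℤ)}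
    (hL : IsOrthant L) (hM : IsOrthant M) : IsOrthohedral (L ∩ M) := by
  obtain ⟨I, hI, rfl⟩ := isOrthant_isBox hL
  obtain ⟨I', hI', rfl⟩ := isOrthant_isBox hM
  have : {v : Fin N → ℤ | ∀ j, v j ∈ I j} ∩ {v | ∀ j, v j ∈ I' j}
      = {v | ∀ j, v j ∈ I j ∩ I' j} := by
    ext v
    simp only [Set.mem_inter_iff, Set.mem_setOf_eq, ← forall_and]
  rw [this]
  exact orthohedral_pi _ fun j => inter_ray_ray (hI j) (hI' j)

lemma orthohedral_inter {N : ℕ} {S T : Set (Fin N → ℤ)}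
    (hS : IsOrthohedral S) (hT : IsOrthohedral T) : IsOrthohedral (S ∩ T) := by
  obtain ⟨𝓛, h𝓛f, h𝓛o, rfl⟩ := hS
  obtain ⟨𝓜, h𝓜f, h𝓜o, rfl⟩ := hT
  have key : ⋃₀ 𝓛 ∩ ⋃₀ 𝓜 = ⋃₀ (Set.image2 (· ∩ ·) 𝓛 𝓜) := by
    ext x
    simp only [Set.mem_inter_iff, Set.mem_sUnion, Set.mem_image2]
    constructor
    · rintro ⟨⟨L, hL, hxL⟩, ⟨M, hM, hxM⟩⟩
      exact ⟨L ∩ M, ⟨L, hL, M, hM, rfl⟩, hxL, hxM⟩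
    · rintro ⟨-, ⟨L, hL, M, hM, rfl⟩, hxL, hxM⟩
      exact ⟨⟨L, hL, hxL⟩, ⟨M, hM, hxM⟩⟩
  rw [key]
  apply orthohedral_sUnion (Set.Finite.image2 _ h𝓛f h𝓜f)
  rintro - ⟨L, hL, M, hM, rfl⟩
  exact orthohedral_inter_orthant (h𝓛o L hL) (h𝓜o M hM)

lemma orthohedral_univ {N : ℕ} : IsOrthohedral (Set.univ : Set (Fin N → ℤ)) := by
  have : (Set.univ : Set (Fin N → ℤ)) = {v | ∀ j, v j ∈ (Set.univ : Set ℤ)} := by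
    ext v; simp
  rw [this]
  exact orthohedral_pi _ fun _ => isRayUnion_univ

lemma orthohedral_sInter {N : ℕ} {F : Set (Set (Fin N → ℤ))} (hF : F.Finite)
    (h : ∀ S ∈ F, IsOrthohedral S) : IsOrthohedral (⋂₀ F) := by
  revert h
  refine Set.Finite.induction_on (motive := fun F _ => (∀ S ∈ F, IsOrthohedral S) → IsOrthohedral (⋂₀ F)) F hF ?_ ?_
  · intro _
    simpa using orthohedral_univ
  · intro a s _ _ ih h
    rw [Set.sInter_insert]
    exact orthohedral_inter (h a (Set.mem_insert _ _))
      (ih fun S hS => h S (Set.mem_insert_of_mem _ hS))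

lemma orthohedral_compl_orthant {N : ℕ} {L : Set (Fin N → ℤ)} (hL : IsOrthant L) :
    IsOrthohedral Lᶜ := by
  classical
  obtain ⟨I, hI, rfl⟩ := isOrthant_isBox hL
  have key : {v : Fin N → ℤ | ∀ j, v j ∈ I j}ᶜ
      = ⋃₀ (Set.range fun j => {v : Fin N → ℤ |
          ∀ k, v k ∈ (if k = j then (I j)ᶜ else Set.univ)}) := by
    ext v
    simp only [Set.mem_compl_iff, Set.mem_setOf_eq, not_forall, Set.mem_sUnion, Set.mem_range,
      exists_exists_eq_and]
    constructor
    · rintro ⟨j, hj⟩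
      refine ⟨j, fun k => ?_⟩
      split_ifs with h
      · subst h; exact hj
      · exact Set.mem_univ _
    · rintro ⟨j, hj⟩
      refine ⟨j, ?_⟩
      have := hj j
      rw [if_pos rfl] at this
      exact this
  rw [key]
  apply orthohedral_sUnion (Set.finite_range _)
  rintro - ⟨j, rfl⟩
  apply orthohedral_pi
  intro k
  split_ifs with h
  · exact compl_ray (hI j)
  · exact isRayUnion_univ

lemma orthohedral_compl {N : ℕ} {S : Set (Fin N → ℤ)} (hS : IsOrthohedral S) :
    IsOrthohedral Sᶜ := by
  obtain ⟨𝓛, h𝓛f, h𝓛o, rfl⟩ := hS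
  rw [Set.compl_sUnion]
  apply orthohedral_sInter (h𝓛f.image _)
  rintro - ⟨L, hL, rfl⟩
  exact orthohedral_compl_orthant (h𝓛o L hL)

end Orthohedral0

/-- Orthohedral subsets of `ℤ^N` are closed under intersections,
unions, and complements. -/
theorem stmt1 {N : ℕ} :
    (∀ S T : Set (Fin N → ℤ), IsOrthohedral S → IsOrthohedral T → IsOrthohedral (S ∩ T)) ∧
    (∀ S T : Set (Fin N → ℤ), IsOrthohedral S → IsOrthohedral T → IsOrthohedral (S ∪ T)) ∧
    (∀ S : Set (Fin N → ℤ), IsOrthohedral S → IsOrthohedral Sᶜ) := by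
  refine ⟨fun S T hS hT => orthohedral_inter hS hT, fun S T hS hT => ?_, fun S hS => orthohedral_compl hS⟩
  obtain ⟨𝓛, h𝓛f, h𝓛o, rfl⟩ := hS
  obtain ⟨𝓜, h𝓜f, h𝓜o, rfl⟩ := hT
  exact ⟨𝓛 ∪ 𝓜, h𝓛f.union h𝓜f,
    fun L hL => hL.elim (h𝓛o L) (h𝓜o L), (Set.sUnion_union _ _).symm⟩

end PeiPaper
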